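/- Let O be a local principal ideal ring with maximal ideal m = (π) such that π^{ℓ} = 0 and π^{ℓ-1} ≠ 0 (length ℓ), and let A ∈ M_n(O) be such that its reduction Ā is cyclic over the residue field. Then the null ideal N_A = {F ∈ O[t] : F(A) = 0} is the principal ideal generated by the characteristic polynomial of A. -/

import Mathlib

open IsLocalRing Polynomial

private lemma aeval_matrix_map {R S : Type*} [CommRing R] [CommRing S] (f : R →+* S)
    {n : ℕ} (A : Matrix (Fin n) (Fin n) R) (p : R[X]) :
    (Polynomial.aeval A p).map f = Polynomial.aeval (A.map f) (p.map f) := by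
  have h1 : (f.mapMatrix (Polynomial.aeval A p) : Matrix (Fin n) (Fin n) S)
      = Polynomial.eval₂ (f.mapMatrix.comp (algebraMap R (Matrix (Fin n) (Fin n) R)))
        (A.map f) p := by
    rw [Polynomial.aeval_def, Polynomial.hom_eval₂]
    rfl
  have h2 : (f.mapMatrix.comp (algebraMap R (Matrix (Fin n) (Fin n) R)))
      = (algebraMap S (Matrix (Fin n) (Fin n) S)).comp f := by
    ext r i j
    simp [Matrix.algebraMap_matrix_apply, Matrix.map_apply, apply_ite f]
  rw [show (Polynomial.aeval A p).map f = f.mapMatrix (Polynomial.aeval A p) from rfl,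
    h1, h2, Polynomial.aeval_def, Polynomial.eval₂_map]

theorem stmt_11 (O : Type*) [CommRing O] [IsLocalRing O] [IsPrincipalIdealRing O]
    (π : O) (hπ : Ideal.span {π} = maximalIdeal O)
    (ℓ : ℕ) (hℓ : 1 ≤ ℓ) (hnil : π ^ ℓ = 0) (hlen : π ^ (ℓ - 1) ≠ 0)
    (n : ℕ) (A : Matrix (Fin n) (Fin n) O)
    (hcyc : minpoly (ResidueField O) (A.map (residue O)) =
      (A.map (residue O)).charpoly) :
    ∀ F : Polynomial O, aeval A F = 0 ↔ F ∈ Ideal.span {A.charpoly} := by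
  have hO : Nontrivial O := nontrivial_of_ne _ _ hlen
  set χ := A.charpoly with hχ
  have hmonic : χ.Monic := A.charpoly_monic
  have hdegχ : χ.natDegree = n := by simp [hχ]
  set k := ResidueField O
  set Abar := A.map (residue O) with hAbar
  intro F
  constructor
  · intro hF
    rw [Ideal.mem_span_singleton, ← Polynomial.modByMonic_eq_zero_iff_dvd hmonic]
    set R := F %ₘ χ with hR
    have hRA : aeval A R = 0 := by
      have hFd : R + χ * (F /ₘ χ) = F := Polynomial.modByMonic_add_div F χ
      have := congrArg (aeval A) hFd
      rw [map_add, map_mul, Matrix.aeval_self_charpoly, zero_mul, add_zero, hF] at this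
      exact this
    by_cases hR0 : R = 0
    · exact hR0
    exfalso
    have hdegR : R.natDegree < n := by
      rw [← hdegχ]
      exact Polynomial.natDegree_lt_natDegree hR0 (Polynomial.degree_modByMonic_lt F hmonic)
    have key : ∀ j : ℕ, ∀ i : ℕ, R.coeff i ∈ Ideal.span {π ^ j} := by
      intro j
      induction j with
      | zero =>
        intro i
        simp [Ideal.span_singleton_one]
      | succ j ih =>
        by_cases hπj : π ^ j = 0
        · intro i
          have h := ih i
          rw [hπj] at h
          simp only [Ideal.mem_span_singleton, zero_dvd_iff] at h
          rw [h]
          exact Ideal.zero_mem _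
        have hc : ∀ i, ∃ c, R.coeff i = π ^ j * c := by
          intro i
          obtain ⟨c, hc⟩ := Ideal.mem_span_singleton.mp (ih i)
          exact ⟨c, hc⟩
        choose c hcs using hc
        set R₁ : O[X] := ∑ i ∈ Finset.range (R.natDegree + 1),
          Polynomial.C (c i) * Polynomial.X ^ i with hR₁
        have hcoeffR₁ : ∀ i, i ≤ R.natDegree → R₁.coeff i = c i := by
          intro i hi
          rw [hR₁]
          simp only [Polynomial.finset_sum_coeff, Polynomial.coeff_C_mul,
            Polynomial.coeff_X_pow, mul_ite, mul_one, mul_zero]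
          simp [Finset.sum_ite_eq, Nat.lt_succ_of_le hi]
        have hRR₁ : R = Polynomial.C (π ^ j) * R₁ := by
          rw [hR₁, Finset.mul_sum]
          conv_lhs => rw [R.as_sum_range' (R.natDegree + 1) (Nat.lt_succ_self _)]
          refine Finset.sum_congr rfl fun i _ => ?_
          rw [← Polynomial.C_mul_X_pow_eq_monomial, hcs i, ← mul_assoc, ← Polynomial.C_mul]
        have hdegR₁ : R₁.natDegree ≤ R.natDegree := by
          refine Polynomial.natDegree_sum_le_of_forall_le _ _ fun i hi => ?_
          refine (Polynomial.natDegree_C_mul_le _ _).trans ?_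
          rw [Polynomial.natDegree_X_pow]
          exact Nat.lt_succ_iff.mp (Finset.mem_range.mp hi)
        have hA1 : ∀ a b, π ^ j * (Polynomial.aeval A R₁ : Matrix (Fin n) (Fin n) O) a b = 0 := by
          intro a b
          have h : (0 : Matrix (Fin n) (Fin n) O) = (π ^ j) • Polynomial.aeval A R₁ := by
            rw [← hRA, hRR₁, map_mul, Polynomial.aeval_C,
              Algebra.algebraMap_eq_smul_one, smul_mul_assoc, one_mul]
          have := congrFun (congrFun h a) b
          simpa [Matrix.smul_apply, smul_eq_mul] using this.symm
        have hmem : ∀ a b, (Polynomial.aeval A R₁ : Matrix (Fin n) (Fin n) O) a b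
            ∈ maximalIdeal O := by
          intro a b
          rw [IsLocalRing.mem_maximalIdeal, mem_nonunits_iff]
          intro hu
          obtain ⟨v, hv⟩ := isUnit_iff_exists_inv.mp hu
          apply hπj
          calc π ^ j = π ^ j * ((Polynomial.aeval A R₁ : Matrix (Fin n) (Fin n) O) a b * v) := by
                rw [hv, mul_one]
            _ = π ^ j * (Polynomial.aeval A R₁ : Matrix (Fin n) (Fin n) O) a b * v := by ring
            _ = 0 := by rw [hA1 a b, zero_mul]
        have hbar : Polynomial.aeval Abar (R₁.map (residue O)) = 0 := by
          rw [hAbar, ← aeval_matrix_map]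
          ext a b
          simp only [Matrix.map_apply, Matrix.zero_apply]
          exact Ideal.Quotient.eq_zero_iff_mem.mpr (hmem a b)
        have hR₁0 : R₁.map (residue O) = 0 := by
          by_contra h
          have hdvd := minpoly.dvd k Abar hbar
          have h1 := Polynomial.natDegree_le_natDegree (Polynomial.degree_le_of_dvd hdvd h)
          rw [hcyc, Matrix.charpoly_natDegree_eq_dim] at h1
          have h2 : (R₁.map (residue O)).natDegree ≤ R₁.natDegree :=
            Polynomial.natDegree_map_le
          rw [Fintype.card_fin] at h1
          omega
        intro i
        by_cases hi : i ≤ R.natDegree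
        · rw [hcs i, Ideal.mem_span_singleton, pow_succ]
          have hres : residue O (c i) = 0 := by
            have := congrArg (fun p => Polynomial.coeff p i) hR₁0
            simpa [Polynomial.coeff_map, hcoeffR₁ i hi] using this
          have hci : π ∣ c i := by
            rw [← Ideal.mem_span_singleton, hπ]
            exact Ideal.Quotient.eq_zero_iff_mem.mp hres
          exact mul_dvd_mul_left _ hci
        · rw [Polynomial.coeff_eq_zero_of_natDegree_lt (Nat.lt_of_not_le hi)]
          exact Ideal.zero_mem _
    apply hR0
    ext i
    have h := key ℓ i
    rw [hnil] at h
    simp only [Ideal.mem_span_singleton, zero_dvd_iff] at h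
    simpa using h
  · intro hF
    rw [Ideal.mem_span_singleton] at hF
    obtain ⟨q, rfl⟩ := hF
    rw [map_mul, Matrix.aeval_self_charpoly, zero_mul]
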